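/- arXiv:0903.4503 — 4 statements merged into one kernel-verified Lean document; each statement's English description precedes it below -/
import Mathlib

section
/- If p, c₁, c₂, c₃ are positive integers and X₁, X₂, X₃ are integers with |Xᵢ| < cᵢp for each i, then 2Cp³ + 6pQ is a sum of six positive integer cubes, where C = c₁³+c₂³+c₃³ and Q = c₁X₁²+c₂X₂²+c₃X₃². -/
theorem sum_six_pos_cubes (p c₁ c₂ c₃ : ℤ) (X₁ X₂ X₃ : ℤ)
    (hp : 0 < p) (hc₁ : 0 < c₁) (hc₂ : 0 < c₂) (hc₃ : 0 < c₃)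
    (h₁ : |X₁| < c₁ * p) (h₂ : |X₂| < c₂ * p) (h₃ : |X₃| < c₃ * p) :
    ∃ n₁ n₂ n₃ n₄ n₅ n₆ : ℤ, 0 < n₁ ∧ 0 < n₂ ∧ 0 < n₃ ∧ 0 < n₄ ∧ 0 < n₅ ∧ 0 < n₆ ∧
      n₁^3 + n₂^3 + n₃^3 + n₄^3 + n₅^3 + n₆^3 =
        2 * (c₁^3 + c₂^3 + c₃^3) * p^3 + 6 * p * (c₁*X₁^2 + c₂*X₂^2 + c₃*X₃^2) := by
  obtain ⟨a₁, b₁⟩ := abs_lt.mp h₁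
  obtain ⟨a₂, b₂⟩ := abs_lt.mp h₂
  obtain ⟨a₃, b₃⟩ := abs_lt.mp h₃
  exact ⟨c₁*p + X₁, c₁*p - X₁, c₂*p + X₂, c₂*p - X₂, c₃*p + X₃, c₃*p - X₃,
    by linarith, by linarith, by linarith, by linarith, by linarith, by linarith, by ring⟩
end

section
/- Let c₁, c₂, c₃ be positive integers with c₁ = min(c₁,c₂,c₃), set C = c₁³+c₂³+c₃³, let β ≥ 1 and p ≥ 1 be integers, and let N be an integer with 2Cp³ + 216β³p³ < N < 2Cp³ + 6c₁³p³. If x₀ is a positive integer with x₀ ≤ 6βp, N − x₀³ = 2Cp³ + 6pQ₀ for some integer Q₀, and Q₀ = c₁X₁² + c₂X₂² + c₃X₃² for some integers X₁, X₂, X₃, then N is the sum of cubes of seven positive integers. -/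
theorem seven_pos_cubes (c₁ c₂ c₃ β p N x₀ Q₀ X₁ X₂ X₃ : ℤ)
    (hc₁ : 0 < c₁) (hc₂ : 0 < c₂) (hc₃ : 0 < c₃)
    (hmin : c₁ = min c₁ (min c₂ c₃))
    (hβ : 1 ≤ β) (hp : 1 ≤ p)
    (hlow : 2 * (c₁^3 + c₂^3 + c₃^3) * p^3 + 216 * β^3 * p^3 < N)
    (hhigh : N < 2 * (c₁^3 + c₂^3 + c₃^3) * p^3 + 6 * c₁^3 * p^3)
    (hx₀ : 0 < x₀) (hx₀le : x₀ ≤ 6 * β * p)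
    (hQ : N - x₀^3 = 2 * (c₁^3 + c₂^3 + c₃^3) * p^3 + 6 * p * Q₀)
    (hrep : Q₀ = c₁*X₁^2 + c₂*X₂^2 + c₃*X₃^2) :
    ∃ n₁ n₂ n₃ n₄ n₅ n₆ n₇ : ℤ, 0 < n₁ ∧ 0 < n₂ ∧ 0 < n₃ ∧ 0 < n₄ ∧ 0 < n₅ ∧
      0 < n₆ ∧ 0 < n₇ ∧
      N = n₁^3 + n₂^3 + n₃^3 + n₄^3 + n₅^3 + n₆^3 + n₇^3 := by
  have h12 : c₁ ≤ c₂ := by have := min_le_left c₂ c₃; omega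
  have h13 : c₁ ≤ c₃ := by have := min_le_right c₂ c₃; omega
  have hQ0 : Q₀ < c₁^3 * p^2 := by nlinarith [pow_pos hx₀ 3]
  have hcube12 : c₁^3 * p^2 ≤ c₂^3 * p^2 :=
    mul_le_mul_of_nonneg_right (pow_le_pow_left₀ hc₁.le h12 3) (sq_nonneg p)
  have hcube13 : c₁^3 * p^2 ≤ c₃^3 * p^2 :=
    mul_le_mul_of_nonneg_right (pow_le_pow_left₀ hc₁.le h13 3) (sq_nonneg p)
  have t1 : c₁ * X₁^2 ≤ Q₀ := by
    nlinarith [mul_nonneg hc₂.le (sq_nonneg X₂), mul_nonneg hc₃.le (sq_nonneg X₃)]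
  have t2 : c₂ * X₂^2 ≤ Q₀ := by
    nlinarith [mul_nonneg hc₁.le (sq_nonneg X₁), mul_nonneg hc₃.le (sq_nonneg X₃)]
  have t3 : c₃ * X₃^2 ≤ Q₀ := by
    nlinarith [mul_nonneg hc₂.le (sq_nonneg X₂), mul_nonneg hc₁.le (sq_nonneg X₁)]
  have hX1 : X₁^2 < (c₁*p)^2 := by
    have : c₁ * X₁^2 < c₁ * (c₁*p)^2 := by nlinarith
    exact lt_of_mul_lt_mul_left this hc₁.le
  have hX2 : X₂^2 < (c₂*p)^2 := by
    have : c₂ * X₂^2 < c₂ * (c₂*p)^2 := by nlinarith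
    exact lt_of_mul_lt_mul_left this hc₂.le
  have hX3 : X₃^2 < (c₃*p)^2 := by
    have : c₃ * X₃^2 < c₃ * (c₃*p)^2 := by nlinarith
    exact lt_of_mul_lt_mul_left this hc₃.le
  have hp0 : 0 < p := hp.trans_lt' zero_lt_one |>.le.lt_of_ne' (by omega) |>.trans_le le_rfl
  have a1 := abs_lt.mp (abs_lt_of_sq_lt_sq hX1 (by positivity))
  have a2 := abs_lt.mp (abs_lt_of_sq_lt_sq hX2 (by positivity))
  have a3 := abs_lt.mp (abs_lt_of_sq_lt_sq hX3 (by positivity))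
  refine ⟨x₀, c₁*p + X₁, c₁*p - X₁, c₂*p + X₂, c₂*p - X₂, c₃*p + X₃, c₃*p - X₃,
    hx₀, by linarith [a1.1], by linarith [a1.2], by linarith [a2.1], by linarith [a2.2],
    by linarith [a3.1], by linarith [a3.2], by linear_combination hQ + 6*p*hrep⟩
end

section
/- If N ≡ 4 (mod 8), p is an odd integer, β is an odd integer, and x₀ is an even integer, then (N − x₀³ − 688(βp)³)/4 is an integer not congruent to N/4 modulo 8. -/
theorem mod8_condition (N p β x₀ : ℤ) (hN : N ≡ 4 [ZMOD 8]) (hp : Odd p)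
    (hβ : Odd β) (hx₀ : Even x₀) :
    4 ∣ (N - x₀^3 - 688*(β*p)^3) ∧
    ¬ ((N - x₀^3 - 688*(β*p)^3)/4 ≡ N/4 [ZMOD 8]) := by
  obtain ⟨k, hk⟩ := hN.dvd
  obtain ⟨a, ha⟩ := hx₀
  obtain ⟨m, hm⟩ := hβ.mul hp
  have hN4 : N = 8*(-k) + 4 := by omega
  have hexp : N - x₀^3 - 688*(β*p)^3 =
      4 * (2*(-k) + 1 - 2*a^3 - 172*(2*m+1)^3) := by
    rw [ha, hm, hN4]; ring
  refine ⟨⟨_, hexp⟩, ?_⟩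
  intro h
  rw [hexp, Int.mul_ediv_cancel_left _ (by norm_num), hN4] at h
  have h4 : (8*(-k) + 4)/4 = 2*(-k) + 1 := by omega
  rw [h4] at h
  have hd : (8 : ℤ) ∣ 2*a^3 + 172*(2*m+1)^3 := by
    have := h.dvd
    have heq : 2*(-k) + 1 - (2*(-k) + 1 - 2*a^3 - 172*(2*m+1)^3)
        = 2*a^3 + 172*(2*m+1)^3 := by ring
    rwa [heq] at this
  have key : ∀ (a m : ZMod 8), 2*a^3 + 172*(2*m+1)^3 ≠ 0 := by decide
  have hz : ((2*a^3 + 172*(2*m+1)^3 : ℤ) : ZMod 8) = 0 :=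
    (ZMod.intCast_zmod_eq_zero_iff_dvd _ 8).mpr hd
  push_cast at hz
  exact key a m hz
end

section
/- The only representations of 2408 as a sum of at most seven positive cubes, up to permutation, are 10³+10³+7³+4³+1³, 12³+8³+5³+3³+2³+2³, 11³+8³+6³+6³+5³+2³, and 10³+10³+6³+4³+4³+4³; in particular, 2408 is not the sum of exactly seven positive cubes. -/
def reps : ℕ → ℕ → ℕ → List (List ℕ)
  | _, 0, t => if t = 0 then [[]] else []
  | lo, k+1, t =>
    (if t = 0 then [[]] else []) ++
    (List.range' lo (14 - lo)).flatMap fun a =>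
      if a^3 ≤ t then (reps a k (t - a^3)).map (a :: ·) else []

lemma mem_reps : ∀ (k : ℕ) (l : List ℕ) (lo t : ℕ), l.Pairwise (· ≤ ·) →
    (∀ x ∈ l, lo ≤ x) → l.length ≤ k → (l.map (fun n => n^3)).sum = t → t ≤ 2408 →
    l ∈ reps lo k t := by
  intro k
  induction k with
  | zero =>
    intro l lo t _ _ hlen hsum ht
    have hl : l = [] := List.length_eq_zero_iff.mp (Nat.le_zero.mp hlen)
    subst hl
    simp at hsum
    simp [reps, ← hsum]
  | succ k ih =>
    intro l lo t hsort hlo hlen hsum ht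
    match l with
    | [] =>
      simp at hsum
      simp [reps, ← hsum]
    | a :: l' =>
      have ha3 : a ^ 3 ≤ t := by
        rw [← hsum]; simp [List.sum_cons]
      have ha13 : a ≤ 13 := by
        by_contra h
        push_neg at h
        have : 14 ^ 3 ≤ a ^ 3 := Nat.pow_le_pow_left h 3
        omega
      have hloa : lo ≤ a := hlo a (by simp)
      have hlen' : l'.length ≤ k := by
        simp [List.length_cons] at hlen; omega
      have hsum' : (l'.map (fun n => n^3)).sum = t - a ^ 3 := by
        rw [← hsum]; simp [List.sum_cons]
      have hmem : l' ∈ reps a k (t - a ^ 3) := by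
        apply ih l' a (t - a^3)
        · exact hsort.of_cons
        · intro x hx
          exact (List.pairwise_cons.mp hsort).1 x hx
        · exact hlen'
        · exact hsum'
        · omega
      show _ ∈ reps lo (k+1) t
      rw [reps]
      apply List.mem_append_right
      rw [List.mem_flatMap]
      refine ⟨a, ?_, ?_⟩
      · rw [List.mem_range'_1]
        omega
      · rw [if_pos ha3]
        exact List.mem_map.mpr ⟨l', hmem, rfl⟩

theorem repr_2408 :
    (∀ s : Multiset ℕ, s.card ≤ 7 → (∀ n ∈ s, 0 < n) →
      (s.map (fun n => n^3)).sum = 2408 →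
      s = {10, 10, 7, 4, 1} ∨ s = {12, 8, 5, 3, 2, 2} ∨
      s = {11, 8, 6, 6, 5, 2} ∨ s = {10, 10, 6, 4, 4, 4}) ∧
    ¬ ∃ n₁ n₂ n₃ n₄ n₅ n₆ n₇ : ℕ, 0 < n₁ ∧ 0 < n₂ ∧ 0 < n₃ ∧ 0 < n₄ ∧ 0 < n₅ ∧
      0 < n₆ ∧ 0 < n₇ ∧ n₁^3 + n₂^3 + n₃^3 + n₄^3 + n₅^3 + n₆^3 + n₇^3 = 2408 := by
  have main : ∀ s : Multiset ℕ, s.card ≤ 7 → (∀ n ∈ s, 0 < n) →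
      (s.map (fun n => n^3)).sum = 2408 →
      s = {10, 10, 7, 4, 1} ∨ s = {12, 8, 5, 3, 2, 2} ∨
      s = {11, 8, 6, 6, 5, 2} ∨ s = {10, 10, 6, 4, 4, 4} := by
    intro s hcard hpos hsum
    set l := s.sort (· ≤ ·) with hl
    have hsl : (↑l : Multiset ℕ) = s := s.sort_eq _
    have hmem : l ∈ reps 1 7 2408 := by
      apply mem_reps
      · exact s.pairwise_sort _
      · intro x hx
        rw [hl, Multiset.mem_sort] at hx
        exact hpos x hx
      · rw [show l.length = Multiset.card (↑l : Multiset ℕ) from rfl, hsl]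
        exact hcard
      · rw [← hsl] at hsum
        simpa using hsum
      · exact le_refl _
    have hreps : reps 1 7 2408 =
        [[1,4,7,10,10],[2,2,3,5,8,12],[2,5,6,6,8,11],[4,4,4,6,10,10]] := by decide
    rw [hreps] at hmem
    simp only [List.mem_cons, List.mem_singleton, List.not_mem_nil, or_false] at hmem
    rcases hmem with h | h | h | h <;> rw [← hsl, h]
    · left; decide
    · right; left; decide
    · right; right; left; decide
    · right; right; right; decide
  refine ⟨main, ?_⟩
  rintro ⟨a, b, c, d, e, f, g, ha, hb, hc, hd, he, hf, hg, hsum⟩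
  have h := main {a, b, c, d, e, f, g} (by simp) (by
      intro n hn
      simp only [Multiset.insert_eq_cons, Multiset.mem_cons, Multiset.mem_singleton] at hn
      rcases hn with h|h|h|h|h|h|h <;> subst h <;> assumption)
    (by simp only [Multiset.insert_eq_cons, Multiset.map_cons, Multiset.map_singleton,
          Multiset.sum_cons, Multiset.sum_singleton]; omega)
  have hcard : ({a, b, c, d, e, f, g} : Multiset ℕ).card = 7 := by simp
  rcases h with h|h|h|h <;> rw [h] at hcard <;> simp at hcard
end
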